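/- arXiv:1204.2460 — 3 statements merged into one kernel-verified Lean document; each statement's English description precedes it below -/
import Mathlib

section
/- Let l ≥ 2 and r ≥ 2 be integers. Define an r-uniform relational structure S on the vertex set {0, 1, ..., (r−1)l} by letting R^S consist of all r-tuples of distinct elements (s_1,...,s_r) such that {s_1,...,s_r} ⊆ S ∖ {0} or {s_1,...,s_r} ⊆ S ∖ {1}. Then: (a) every l-colouring of S (a map γ : S → {1,...,l} such that no R-relationship is monochromatic) satisfies γ(0) = γ(1); and (b) for every colour i ∈ {1,...,l} there exists an l-colouring γ of S with γ(0) = γ(1) = i. -/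
open Fin.NatCast

private lemma exists_inj_tuple {α : Type*} (B : Finset α) (r : ℕ) (h : r ≤ B.card) :
    ∃ t : Fin r → α, Function.Injective t ∧ ∀ j, t j ∈ B := by
  classical
  obtain ⟨C, hCB, hC⟩ := Finset.exists_subset_card_eq h
  letI : LinearOrder α := IsWellOrder.linearOrder WellOrderingRel
  exact ⟨fun j => (C.orderIsoOfFin hC j : α),
    fun a b hab => (C.orderIsoOfFin hC).injective (Subtype.ext hab),
    fun j => hCB (C.orderIsoOfFin hC j).2⟩

private lemma card_ge_of_inj_tuple {α : Type*} (B : Finset α) (r : ℕ)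
    (t : Fin r → α) (ht : Function.Injective t) (hB : ∀ j, t j ∈ B) :
    r ≤ B.card := by
  classical
  calc r = (Finset.univ : Finset (Fin r)).card := by simp
  _ ≤ B.card := Finset.card_le_card_of_injOn t (fun a _ => hB a)
      (Set.injOn_of_injective ht)

theorem stmt_9 (l r : ℕ) (hl : 2 ≤ l) (hr : 2 ≤ r) :
    (∀ γ : Fin ((r - 1) * l + 1) → Fin l,
        (∀ t : Fin r → Fin ((r - 1) * l + 1),
            Function.Injective t →
            ((∀ j, t j ≠ 0) ∨ (∀ j, t j ≠ 1)) →
            ¬ ∀ j j' : Fin r, γ (t j) = γ (t j')) →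
        γ 0 = γ 1) ∧
    (∀ i : Fin l, ∃ γ : Fin ((r - 1) * l + 1) → Fin l,
        (∀ t : Fin r → Fin ((r - 1) * l + 1),
            Function.Injective t →
            ((∀ j, t j ≠ 0) ∨ (∀ j, t j ≠ 1)) →
            ¬ ∀ j j' : Fin r, γ (t j) = γ (t j')) ∧ γ 0 = γ 1 ∧ γ 0 = i) := by
  classical
  haveI : NeZero l := ⟨by omega⟩
  have hml : 2 ≤ (r - 1) * l := by
    calc 2 = 1 * 2 := by norm_num
    _ ≤ (r - 1) * l := Nat.mul_le_mul (by omega) hl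
  have hval1 : ((1 : Fin ((r - 1) * l + 1)) : ℕ) = 1 := by
    rw [Fin.val_one']; exact Nat.mod_eq_of_lt (by omega)
  have hval0 : ((0 : Fin ((r - 1) * l + 1)) : ℕ) = 0 := rfl
  have hr1 : 0 < r - 1 := by omega
  have hq : ∀ s : Fin ((r - 1) * l + 1), ((s : ℕ) - 1) / (r - 1) < l := by
    intro s
    rw [Nat.div_lt_iff_lt_mul hr1]
    have h1 := s.isLt
    have h2 : l * (r - 1) = (r - 1) * l := mul_comm _ _
    omega
  have hcast : ∀ q q' : ℕ, q < l → q' < l → ((q : Fin l) = (q' : Fin l)) → q = q' := by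
    intro q q' h h' he
    have := congrArg Fin.val he
    rwa [Fin.val_cast_of_lt h, Fin.val_cast_of_lt h'] at this
  constructor
  · -- part (a)
    intro γ H
    by_contra h01
    have key : ∀ (a : Fin ((r - 1) * l + 1)), (a = 0 ∨ a = 1) → ∀ c : Fin l,
        ((Finset.univ.erase a).filter (fun s => γ s = c)).card ≤ r - 1 := by
      intro a ha c
      by_contra hlt
      push_neg at hlt
      have hrle : r ≤ ((Finset.univ.erase a).filter (fun s => γ s = c)).card := by omega
      obtain ⟨t, htinj, htB⟩ := exists_inj_tuple _ r hrle
      have hmem : ∀ j, (t j ≠ a) ∧ γ (t j) = c := by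
        intro j
        have := htB j
        simp only [Finset.mem_filter, Finset.mem_erase, Finset.mem_univ, and_true] at this
        exact ⟨this.1, this.2⟩
      refine H t htinj ?_ (fun j j' => by rw [(hmem j).2, (hmem j').2])
      rcases ha with rfl | rfl
      · exact Or.inl (fun j => (hmem j).1)
      · exact Or.inr (fun j => (hmem j).1)
    have hfib : ∀ a : Fin ((r - 1) * l + 1),
        ∑ c : Fin l, ((Finset.univ.erase a).filter (fun s => γ s = c)).card = (r - 1) * l := by
      intro a
      rw [← Finset.card_eq_sum_card_fiberwise (f := γ) (t := Finset.univ)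
        (fun x _ => Finset.mem_univ (γ x))]
      rw [Finset.card_erase_of_mem (Finset.mem_univ a)]
      simp
    have hexact : ∀ c : Fin l,
        ((Finset.univ.erase (1 : Fin ((r - 1) * l + 1))).filter (fun s => γ s = c)).card
          = r - 1 := by
      by_contra h
      push_neg at h
      obtain ⟨c, hc⟩ := h
      have hlt := lt_of_le_of_ne (key 1 (Or.inr rfl) c) hc
      have hs := Finset.sum_lt_sum (s := (Finset.univ : Finset (Fin l)))
        (g := fun _ => r - 1) (fun c _ => key 1 (Or.inr rfl) c)
        ⟨c, Finset.mem_univ c, hlt⟩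
      rw [hfib 1, Finset.sum_const, Finset.card_univ, Fintype.card_fin, smul_eq_mul,
        mul_comm] at hs
      exact lt_irrefl _ hs
    set A := Finset.univ.filter (fun s => γ s = γ 1) with hA
    have h0A : (0 : Fin ((r - 1) * l + 1)) ∉ A := by
      simp only [hA, Finset.mem_filter, Finset.mem_univ, true_and]
      exact h01
    have h1A : (1 : Fin ((r - 1) * l + 1)) ∈ A := by
      simp [hA]
    have c0 : A.card ≤ r - 1 := by
      have := key 0 (Or.inl rfl) (γ 1)
      rwa [Finset.filter_erase, ← hA, Finset.erase_eq_of_notMem h0A] at this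
    have c1 : A.card - 1 = r - 1 := by
      have := hexact (γ 1)
      rwa [Finset.filter_erase, ← hA, Finset.card_erase_of_mem h1A] at this
    have hA1 : 1 ≤ A.card := Finset.card_pos.2 ⟨1, h1A⟩
    omega
  · -- part (b)
    intro i
    set γ : Fin ((r - 1) * l + 1) → Fin l :=
      fun s => if s = 0 then i else i + ((((s : ℕ) - 1) / (r - 1) : ℕ) : Fin l) with hγ
    have h10 : (1 : Fin ((r - 1) * l + 1)) ≠ 0 := by
      intro h
      have := congrArg Fin.val h
      rw [hval1, hval0] at this
      exact one_ne_zero this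
    have hγ0 : γ 0 = i := by simp [hγ]
    have hγ1 : γ 1 = i := by
      have hz : (((1 : Fin ((r - 1) * l + 1)) : ℕ) - 1) / (r - 1) = 0 := by
        rw [hval1]; simp
      rw [hγ]
      simp only [if_neg h10, hz, Nat.cast_zero, add_zero]
    refine ⟨γ, ?_, hγ0.trans hγ1.symm, hγ0⟩
    intro t htinj hav hmono
    have hj0 : (0 : ℕ) < r := by omega
    set c := γ (t ⟨0, hj0⟩) with hc
    obtain ⟨a, ha, hta⟩ : ∃ a : Fin ((r - 1) * l + 1),
        (a = 0 ∨ a = 1) ∧ ∀ j, t j ≠ a := by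
      rcases hav with h | h
      · exact ⟨0, Or.inl rfl, h⟩
      · exact ⟨1, Or.inr rfl, h⟩
    set B := Finset.univ.filter (fun s => γ s = c ∧ s ≠ a) with hB
    have hge : r ≤ B.card := by
      refine card_ge_of_inj_tuple B r t htinj (fun j => ?_)
      simp only [hB, Finset.mem_filter, Finset.mem_univ, true_and]
      exact ⟨hmono j ⟨0, hj0⟩, hta j⟩
    -- key injectivity: s ↦ (s - 1) % (r - 1) is injective on B
    have hvστ : ∀ s : Fin ((r - 1) * l + 1), s ≠ 0 → γ s = c →
        ((s : ℕ) - 1) = (r - 1) * (((s : ℕ) - 1) / (r - 1)) + ((s : ℕ) - 1) % (r - 1) :=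
      fun s _ _ => (Nat.div_add_mod _ _).symm
    have hle : B.card ≤ r - 1 := by
      have := Finset.card_le_card_of_injOn
        (s := B) (t := Finset.range (r - 1))
        (fun s => ((s : ℕ) - 1) % (r - 1))
        (fun s _ => Finset.mem_range.2 (Nat.mod_lt _ hr1)) ?_
      · rwa [Finset.card_range] at this
      intro s hs s' hs' hf
      have hf' : ((s : ℕ) - 1) % (r - 1) = ((s' : ℕ) - 1) % (r - 1) := hf
      simp only [hB, Finset.coe_filter, Set.mem_setOf_eq, Finset.mem_univ, true_and] at hs hs'
      obtain ⟨hsc, hsa⟩ := hs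
      obtain ⟨hsc', hsa'⟩ := hs'
      -- helper: if s ≠ 0 and γ s = i then (s-1)/(r-1) ≡ 0, so s = 1
      have hone : ∀ u : Fin ((r - 1) * l + 1), u ≠ 0 → γ u = i →
          ((u : ℕ) - 1) % (r - 1) = 0 → (u : ℕ) = 1 := by
        intro u hu0 hui hmod
        have : i + ((((u : ℕ) - 1) / (r - 1) : ℕ) : Fin l) = i := by
          rw [hγ] at hui; simpa [hu0] using hui
        have hz : ((((u : ℕ) - 1) / (r - 1) : ℕ) : Fin l) = ((0 : ℕ) : Fin l) := by
          rw [Nat.cast_zero]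
          exact (add_eq_left).1 this
        have hq0 : ((u : ℕ) - 1) / (r - 1) = 0 := hcast _ _ (hq u) (by omega) hz
        have := Nat.div_add_mod ((u : ℕ) - 1) (r - 1)
        rw [hq0, hmod] at this
        have huv : (u : ℕ) ≠ 0 := fun h => hu0 (Fin.ext (h.trans hval0.symm))
        omega
      by_cases hs0 : s = 0
      · by_cases hs0' : s' = 0
        · rw [hs0, hs0']
        · -- s = 0, s' ≠ 0 : then c = i, γ s' = i
          exfalso
          have hci : c = i := by rw [← hsc, hs0, hγ0]
          have hf0 : ((s' : ℕ) - 1) % (r - 1) = 0 := by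
            rw [← hf', hs0]; simp
          have : (s' : ℕ) = 1 := hone s' hs0' (hsc'.trans hci) hf0
          have hs'1 : s' = 1 := Fin.ext (this.trans hval1.symm)
          rcases ha with rfl | rfl
          · exact hsa hs0
          · exact hsa' hs'1
      · by_cases hs0' : s' = 0
        · exfalso
          have hci : c = i := by rw [← hsc', hs0', hγ0]
          have hf0 : ((s : ℕ) - 1) % (r - 1) = 0 := by
            rw [hf', hs0']; simp
          have : (s : ℕ) = 1 := hone s hs0 (hsc.trans hci) hf0
          have hs1 : s = 1 := Fin.ext (this.trans hval1.symm)
          rcases ha with rfl | rfl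
          · exact hsa' hs0'
          · exact hsa hs1
        · -- both nonzero
          have he : i + ((((s : ℕ) - 1) / (r - 1) : ℕ) : Fin l)
              = i + ((((s' : ℕ) - 1) / (r - 1) : ℕ) : Fin l) := by
            have h1 : γ s = γ s' := hsc.trans hsc'.symm
            rw [hγ] at h1
            simpa [hs0, hs0'] using h1
          have hqq : ((s : ℕ) - 1) / (r - 1) = ((s' : ℕ) - 1) / (r - 1) :=
            hcast _ _ (hq s) (hq s') (add_left_cancel he)
          have e1 := Nat.div_add_mod ((s : ℕ) - 1) (r - 1)
          have e2 := Nat.div_add_mod ((s' : ℕ) - 1) (r - 1)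
          rw [hqq, hf'] at e1
          have hv : (s : ℕ) ≠ 0 := fun h => hs0 (Fin.ext (h.trans hval0.symm))
          have hv' : (s' : ℕ) ≠ 0 := fun h => hs0' (Fin.ext (h.trans hval0.symm))
          exact Fin.ext (by omega)
    omega
end

section
/- Let L be a relational language. Suppose A, B, M are L-structures with the same signature, A ⊆ M is a substructure, and B has the same universe as A. Define M[A▷B] as the structure with universe M where, for each relation symbol R of arity r: a tuple from A^r is in R^{M[A▷B]} iff it is in R^B, and a tuple from M^r ∖ A^r is in R^{M[A▷B]} iff it is in R^M. Let K be a class of finite L-structures; call a structure permitted if it embeds into a member of K, and say K weakly admits the substitution [A▷B] if for every structure N isomorphic to a member of K with A ⊆ N, N[A▷B] is permitted. Then: if [A▷B] is weakly admitted and M is any permitted structure with A ⊆ M, then M[A▷B] is permitted. -/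
/-- A relational structure over signature `ι` with arities `ar`,
with underlying universe a subset of a common value type `V`. -/
structure RelStruct (ι : Type) (ar : ι → ℕ) (V : Type) where
  dom : Set V
  rel : ∀ i : ι, Set (Fin (ar i) → V)

namespace RelStruct

variable {ι : Type} {ar : ι → ℕ} {V : Type}

/-- `A` is a substructure of `M`. -/
def Substr (A M : RelStruct ι ar V) : Prop :=
  A.dom ⊆ M.dom ∧ ∀ i : ι, A.rel i = {t ∈ M.rel i | ∀ j, t j ∈ A.dom}

/-- `A` embeds into `B`. -/
def Embeds (A B : RelStruct ι ar V) : Prop :=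
  ∃ f : V → V, Set.InjOn f A.dom ∧ f '' A.dom ⊆ B.dom ∧
    ∀ (i : ι) (t : Fin (ar i) → V), (∀ j, t j ∈ A.dom) →
      (t ∈ A.rel i ↔ (f ∘ t) ∈ B.rel i)

/-- `A` is isomorphic to `B`. -/
def Iso (A B : RelStruct ι ar V) : Prop :=
  ∃ f : V → V, Set.InjOn f A.dom ∧ f '' A.dom = B.dom ∧
    ∀ (i : ι) (t : Fin (ar i) → V), (∀ j, t j ∈ A.dom) →
      (t ∈ A.rel i ↔ (f ∘ t) ∈ B.rel i)

/-- `A` is permitted w.r.t. the class `K`: it embeds into a member of `K`. -/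
def Permitted (K : Set (RelStruct ι ar V)) (A : RelStruct ι ar V) : Prop :=
  ∃ M ∈ K, Embeds A M

/-- `A` is represented w.r.t. the class `K`: it is isomorphic to a member of `K`. -/
def Represented (K : Set (RelStruct ι ar V)) (A : RelStruct ι ar V) : Prop :=
  ∃ M ∈ K, Iso A M

/-- `M[A ▷ B]`: the structure `M` with `A` replaced by `B` (where `A.dom = B.dom`):
on tuples entirely inside `A.dom` the relations are those of `B`, elsewhere those of `M`. -/
def subst (M A B : RelStruct ι ar V) : RelStruct ι ar V where
  dom := M.dom
  rel := fun i =>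
    {t | ((∀ j, t j ∈ A.dom) ∧ t ∈ B.rel i) ∨ ((¬ ∀ j, t j ∈ A.dom) ∧ t ∈ M.rel i)}

/-- `K` weakly admits the substitution `[A ▷ B]`. -/
def WeaklyAdmits (K : Set (RelStruct ι ar V)) (A B : RelStruct ι ar V) : Prop :=
  ∀ N : RelStruct ι ar V, Represented K N → Substr A N → Permitted K (subst N A B)

/-- Transitivity of embeddings. -/
theorem Embeds.trans' {A B C : RelStruct ι ar V} (h1 : Embeds A B) (h2 : Embeds B C) :
    Embeds A C := by
  obtain ⟨f, hf1, hf2, hf3⟩ := h1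
  obtain ⟨g, hg1, hg2, hg3⟩ := h2
  refine ⟨g ∘ f, ?_, ?_, ?_⟩
  · intro x hx y hy hxy
    exact hf1 hx hy (hg1 (hf2 ⟨x, hx, rfl⟩) (hf2 ⟨y, hy, rfl⟩) hxy)
  · rintro _ ⟨x, hx, rfl⟩
    exact hg2 ⟨f x, hf2 ⟨x, hx, rfl⟩, rfl⟩
  · intro i t ht
    rw [hf3 i t ht, hg3 i (f ∘ t) (fun j => hf2 ⟨t j, ht j, rfl⟩)]
    rfl

/-- Any injection on a finite set extends to a permutation of the ambient type. -/
theorem exists_perm_extend {s : Set V} (hs : s.Finite) {f : V → V} (hf : Set.InjOn f s) :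
    ∃ π : Equiv.Perm V, ∀ x ∈ s, π x = f x := by
  classical
  -- the embedding from s into V given by f
  let e : s ↪ V := ⟨fun x => f x, fun x y hxy => Subtype.ext (hf x.2 y.2 hxy)⟩
  have hrange : Set.range e = f '' s := by
    ext y; constructor
    · rintro ⟨⟨x, hx⟩, rfl⟩; exact ⟨x, hx, rfl⟩
    · rintro ⟨x, hx, rfl⟩; exact ⟨⟨x, hx⟩, rfl⟩
  have hcard : Cardinal.mk s = Cardinal.mk (f '' s) :=
    Cardinal.mk_congr (Equiv.Set.imageOfInjOn f s hf)
  have hcompl : Nonempty ((sᶜ : Set V) ≃ ((Set.range e)ᶜ : Set V)) := by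
    rw [hrange]
    cases finite_or_infinite V with
    | inl hV =>
      exact (Cardinal.eq.mp (Cardinal.mk_compl_eq_mk_compl_finite_same hcard))
    | inr hV =>
      have h1 : Cardinal.mk (sᶜ : Set V) = Cardinal.mk V :=
        Cardinal.mk_compl_of_infinite s (hs.lt_aleph0.trans_le (Cardinal.aleph0_le_mk V))
      have h2 : Cardinal.mk ((f '' s)ᶜ : Set V) = Cardinal.mk V :=
        Cardinal.mk_compl_of_infinite _
          ((hs.image f).lt_aleph0.trans_le (Cardinal.aleph0_le_mk V))
      exact Cardinal.eq.mp (h1.trans h2.symm)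
  obtain ⟨g, hg⟩ := Cardinal.extend_function e hcompl
  exact ⟨g, fun x hx => hg ⟨x, hx⟩⟩

end RelStruct

theorem stmt_15 {ι V : Type} {ar : ι → ℕ} (K : Set (RelStruct ι ar V))
    (hKfin : ∀ M ∈ K, M.dom.Finite)
    (A B M : RelStruct ι ar V) (hAB : A.dom = B.dom)
    (hadm : RelStruct.WeaklyAdmits K A B)
    (hMperm : RelStruct.Permitted K M) (hAM : RelStruct.Substr A M) :
    RelStruct.Permitted K (RelStruct.subst M A B) := by
  classical
  obtain ⟨N, hNK, f, hfinj, hfim, hfrel⟩ := hMperm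
  have hMfin : M.dom.Finite :=
    Set.Finite.of_finite_image ((hKfin N hNK).subset hfim) hfinj
  -- a permutation π of V with π a = f a for a ∈ M.dom
  obtain ⟨π, hπ⟩ := RelStruct.exists_perm_extend hMfin hfinj
  set σ : V → V := fun x => π.symm x with hσ
  have hσf : ∀ a ∈ M.dom, σ (f a) = a := fun a ha => by
    rw [hσ, ← hπ a ha]; exact Equiv.symm_apply_apply π a
  -- the isomorphic copy of N containing M.dom
  set N' : RelStruct ι ar V :=
    { dom := σ '' N.dom
      rel := fun i => {t | (∀ j, t j ∈ σ '' N.dom) ∧ (π ∘ t) ∈ N.rel i} }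
    with hN'
  have hMsub : M.dom ⊆ N'.dom := fun x hx =>
    ⟨f x, hfim ⟨x, hx, rfl⟩, hσf x hx⟩
  have hπcomp : ∀ {i : ι} (t : Fin (ar i) → V), (∀ j, t j ∈ M.dom) → π ∘ t = f ∘ t :=
    fun t ht => funext fun j => hπ (t j) (ht j)
  -- membership criterion in N'.rel
  have hrelN' : ∀ (i : ι) (t : Fin (ar i) → V), (∀ j, t j ∈ M.dom) →
      (t ∈ N'.rel i ↔ t ∈ M.rel i) := by
    intro i t ht
    constructor
    · intro h
      exact (hfrel i t ht).mpr (by rw [← hπcomp t ht]; exact h.2)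
    · intro h
      exact ⟨fun j => hMsub (ht j), by rw [hπcomp t ht]; exact (hfrel i t ht).mp h⟩
  -- N' is isomorphic to N (via π), hence represented
  have hrep : RelStruct.Represented K N' := by
    refine ⟨N, hNK, π, (Equiv.injective _).injOn, ?_, fun i t ht => ?_⟩
    · ext y; constructor
      · rintro ⟨_, ⟨x, hx, rfl⟩, rfl⟩; simpa [hσ] using hx
      · intro hy; exact ⟨σ y, ⟨y, hy, rfl⟩, by simp [hσ]⟩
    · exact ⟨fun h => h.2, fun h => ⟨ht, h⟩⟩
  -- A is a substructure of N'
  have hAN' : RelStruct.Substr A N' := by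
    refine ⟨hAM.1.trans hMsub, fun i => ?_⟩
    ext t
    rw [hAM.2 i]
    simp only [Set.mem_setOf_eq]
    constructor
    · rintro ⟨htM, htA⟩
      exact ⟨(hrelN' i t fun j => hAM.1 (htA j)).mpr htM, htA⟩
    · rintro ⟨htN', htA⟩
      exact ⟨(hrelN' i t fun j => hAM.1 (htA j)).mp htN', htA⟩
  -- apply weak admittance
  obtain ⟨P, hPK, hemb⟩ := hadm N' hrep hAN'
  refine ⟨P, hPK, RelStruct.Embeds.trans' ?_ hemb⟩
  -- subst M A B embeds (via the identity) into subst N' A B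
  refine ⟨id, Set.injOn_id _, ?_, fun i t ht => ?_⟩
  · rintro _ ⟨x, hx, rfl⟩; exact hMsub hx
  · have ht' : ∀ j, t j ∈ M.dom := ht
    simp only [RelStruct.subst, Set.mem_setOf_eq, Function.id_comp]
    by_cases hA : ∀ j, t j ∈ A.dom
    · simp [hA]
    · simp only [hA, false_and, not_false_iff, true_and, false_or]
      exact (hrelN' i t ht').symm
end

section
/- Fix integers l ≥ 2, m ≥ 2 and a real a > l satisfying ((a−1)/a)^m/(l−1)^(m−1) > 1/l^(m−1). Let σ, γ : {1,...,n} → {1,...,l} where σ satisfies n/l − 1 ≤ |σ^{-1}(i)| ≤ n/l + 1 for all i, and γ is not (n/a)-rich. Then there is a constant c > 0 (depending only on l, m, a) such that for all sufficiently large n, mult(n,σ,m) − mult(n,γ,m) ≥ c·n^m. -/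
open Finset

lemma count_mono {n l : ℕ} (m : ℕ) (hm : 1 ≤ m) (f : Fin n → Fin l) :
    (Finset.univ.filter (fun t : Fin m → Fin n => ∀ j j' : Fin m, f (t j) = f (t j'))).card
      = ∑ i : Fin l, (Finset.univ.filter (fun x => f x = i)).card ^ m := by
  classical
  have h0 : (0 : ℕ) < m := hm
  have key : (Finset.univ.filter (fun t : Fin m → Fin n => ∀ j j' : Fin m, f (t j) = f (t j')))
      = Finset.univ.biUnion (fun i : Fin l =>
          Finset.univ.filter (fun t : Fin m → Fin n => ∀ j, f (t j) = i)) := by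
    ext t
    simp only [Finset.mem_filter, Finset.mem_biUnion, Finset.mem_univ, true_and]
    constructor
    · intro h; exact ⟨f (t ⟨0, h0⟩), fun j => h j ⟨0, h0⟩⟩
    · rintro ⟨i, hi⟩ j j'; rw [hi j, hi j']
  rw [key, Finset.card_biUnion]
  · refine Finset.sum_congr rfl fun i _ => ?_
    have h2 : (Finset.univ.filter (fun t : Fin m → Fin n => ∀ j, f (t j) = i))
        = Fintype.piFinset (fun _ : Fin m => Finset.univ.filter (fun x => f x = i)) := by
      ext t; simp [Fintype.mem_piFinset]
    rw [h2, Fintype.card_piFinset]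
    simp
  · intro i _ i' _ hii'
    simp only [Function.onFun]; rw [Finset.disjoint_left]
    intro t ht ht'
    simp only [Finset.mem_filter, Finset.mem_univ, true_and] at ht ht'
    exact hii' ((ht ⟨0, h0⟩).symm.trans (ht' ⟨0, h0⟩))

lemma count_nonmono {n l : ℕ} (m : ℕ) (hm : 1 ≤ m) (f : Fin n → Fin l) :
    ((Finset.univ.filter
        (fun t : Fin m → Fin n => ¬ ∀ j j' : Fin m, f (t j) = f (t j'))).card : ℝ)
      = (n : ℝ) ^ m - ∑ i : Fin l, ((Finset.univ.filter (fun x => f x = i)).card : ℝ) ^ m := by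
  classical
  have h := Finset.card_filter_add_card_filter_not
    (s := (Finset.univ : Finset (Fin m → Fin n)))
    (p := fun t : Fin m → Fin n => ∀ j j' : Fin m, f (t j) = f (t j'))
  rw [count_mono m hm f] at h
  have hcard : (Finset.univ : Finset (Fin m → Fin n)).card = n ^ m := by
    simp [Finset.card_univ]
  rw [hcard] at h
  have h2 := congrArg (fun k : ℕ => (k : ℝ)) h
  push_cast at h2
  linarith

lemma sum_fibers {n l : ℕ} (f : Fin n → Fin l) :
    ∑ i : Fin l, (Finset.univ.filter (fun x => f x = i)).card = n := by
  classical
  have h := Finset.card_eq_sum_card_fiberwise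
    (fun (x : Fin n) (_ : x ∈ Finset.univ) => Finset.mem_univ (f x))
  simpa using h.symm

theorem stmt_16 (l m : ℕ) (hl : 2 ≤ l) (hm : 2 ≤ m) (a : ℝ) (hal : (l : ℝ) < a)
    (hineq : ((a - 1) / a) ^ m / ((l : ℝ) - 1) ^ (m - 1) > 1 / (l : ℝ) ^ (m - 1)) :
    ∃ c : ℝ, 0 < c ∧ ∃ N : ℕ, ∀ n ≥ N, ∀ σ γ : Fin n → Fin l,
      (∀ i : Fin l,
        (n : ℝ) / l - 1 ≤ ((Finset.univ.filter (fun x => σ x = i)).card : ℝ) ∧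
        ((Finset.univ.filter (fun x => σ x = i)).card : ℝ) ≤ (n : ℝ) / l + 1) →
      (∃ i : Fin l,
        ((Finset.univ.filter (fun x => γ x = i)).card : ℝ) < (n : ℝ) / a) →
      ((Finset.univ.filter
          (fun t : Fin m → Fin n => ¬ ∀ j j' : Fin m, σ (t j) = σ (t j'))).card : ℝ)
        - ((Finset.univ.filter
          (fun t : Fin m → Fin n => ¬ ∀ j j' : Fin m, γ (t j) = γ (t j'))).card : ℝ)
        ≥ c * (n : ℝ) ^ m := by
  classical
  have hm1 : 1 ≤ m := le_trans (by norm_num) hm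
  have hl0 : (0 : ℝ) < l := by positivity
  have hlR : (2 : ℝ) ≤ l := by exact_mod_cast hl
  have hl1 : (0 : ℝ) < (l : ℝ) - 1 := by linarith
  have hlpow : (0 : ℝ) < (l : ℝ) ^ (m - 1) := by positivity
  have ha0 : (0 : ℝ) < a := lt_trans hl0 hal
  have ha1 : (1 : ℝ) < a := by linarith
  set ε : ℝ := ((a - 1) / a) ^ m / ((l : ℝ) - 1) ^ (m - 1) - 1 / (l : ℝ) ^ (m - 1) with hε
  have hε0 : 0 < ε := sub_pos.mpr hineq
  refine ⟨ε / 2, by positivity, ?_⟩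
  set δ : ℝ := (ε / 2) * (l : ℝ) ^ (m - 1) with hδ
  have hδ0 : 0 < δ := by positivity
  have htend : Filter.Tendsto (fun n : ℕ => (1 + (l : ℝ) / n) ^ m) Filter.atTop (nhds 1) := by
    have h1 : Filter.Tendsto (fun n : ℕ => 1 + (l : ℝ) / n) Filter.atTop (nhds 1) := by
      have := (tendsto_const_nhds (x := (1 : ℝ)) (f := Filter.atTop (α := ℕ))).add
        (tendsto_const_div_atTop_nhds_zero_nat (l : ℝ))
      simpa using this
    simpa using h1.pow m
  obtain ⟨N0, hN0⟩ := Filter.eventually_atTop.mp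
    (htend.eventually_lt_const (by linarith : (1 : ℝ) < 1 + δ))
  refine ⟨max N0 1, ?_⟩
  intro n hn σ γ hσ hγ
  have hn1 : 1 ≤ n := le_trans (le_max_right _ _) hn
  have hnR : (0 : ℝ) < n := by exact_mod_cast hn1
  have hkey : ((n : ℝ) + l) ^ m ≤ (1 + δ) * (n : ℝ) ^ m := by
    have h := hN0 n (le_trans (le_max_left _ _) hn)
    have hEq : ((n : ℝ) + l) ^ m = (1 + (l : ℝ) / n) ^ m * (n : ℝ) ^ m := by
      rw [← mul_pow]; congr 1; field_simp
    rw [hEq]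
    exact mul_le_mul_of_nonneg_right h.le (by positivity)
  rw [count_nonmono m hm1 σ, count_nonmono m hm1 γ]
  have hlm : (l : ℝ) ^ m = (l : ℝ) ^ (m - 1) * l := by
    rw [← pow_succ]; congr 1; omega
  -- upper bound for σ-sum
  have hσsum : ∑ i : Fin l, ((Finset.univ.filter (fun x => σ x = i)).card : ℝ) ^ m
      ≤ ((n : ℝ) + l) ^ m / (l : ℝ) ^ (m - 1) := by
    have hb : ∀ i : Fin l, ((Finset.univ.filter (fun x => σ x = i)).card : ℝ) ^ m
        ≤ (((n : ℝ) + l) / l) ^ m := by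
      intro i
      have h1 := (hσ i).2
      have h2 : (n : ℝ) / l + 1 = ((n : ℝ) + l) / l := by field_simp
      exact pow_le_pow_left₀ (by positivity) (by rw [← h2]; exact h1) m
    calc ∑ i : Fin l, ((Finset.univ.filter (fun x => σ x = i)).card : ℝ) ^ m
        ≤ ∑ _i : Fin l, (((n : ℝ) + l) / l) ^ m := Finset.sum_le_sum fun i _ => hb i
      _ = (l : ℝ) * (((n : ℝ) + l) / l) ^ m := by
          rw [Finset.sum_const, Finset.card_univ, Fintype.card_fin, nsmul_eq_mul]
      _ = ((n : ℝ) + l) ^ m / (l : ℝ) ^ (m - 1) := by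
          rw [div_pow]
          rw [eq_div_iff (ne_of_gt hlpow)]
          field_simp
          rw [hlm]; ring
  -- lower bound for γ-sum
  obtain ⟨i₀, hi₀⟩ := hγ
  have hγsum : ((a - 1) / a) ^ m / ((l : ℝ) - 1) ^ (m - 1) * (n : ℝ) ^ m
      ≤ ∑ i : Fin l, ((Finset.univ.filter (fun x => γ x = i)).card : ℝ) ^ m := by
    set d : Fin l → ℝ := fun i => ((Finset.univ.filter (fun x => γ x = i)).card : ℝ) with hd
    have hdnn : ∀ i, 0 ≤ d i := fun i => Nat.cast_nonneg _
    have hdsum : ∑ i, d i = n := by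
      rw [hd]; beta_reduce; exact_mod_cast congrArg (fun k : ℕ => (k : ℝ)) (sum_fibers γ)
    have herase := Finset.sum_erase_add Finset.univ d (Finset.mem_univ i₀)
    have hrest : (n : ℝ) * ((a - 1) / a) ≤ ∑ i ∈ Finset.univ.erase i₀, d i := by
      have h2 : (n : ℝ) * ((a - 1) / a) = n - n / a := by field_simp
      rw [h2]
      have hdi₀ : d i₀ < (n : ℝ) / a := hi₀
      linarith [hdsum, herase]
    have hApos : (0 : ℝ) ≤ (n : ℝ) * ((a - 1) / a) :=
      mul_nonneg hnR.le (div_nonneg (by linarith) ha0.le)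
    have hpow : ((n : ℝ) * ((a - 1) / a)) ^ m ≤ (∑ i ∈ Finset.univ.erase i₀, d i) ^ m :=
      pow_le_pow_left₀ hApos hrest m
    have hcard : (Finset.univ.erase i₀).card = l - 1 := by
      rw [Finset.card_erase_of_mem (Finset.mem_univ i₀)]; simp
    have hpm := pow_sum_div_card_le_sum_pow (s := Finset.univ.erase i₀) (f := d)
      (fun i _ => hdnn i) (m - 1)
    rw [hcard] at hpm
    have hm' : m - 1 + 1 = m := by omega
    rw [hm'] at hpm
    have hcast : ((l - 1 : ℕ) : ℝ) = (l : ℝ) - 1 := by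
      have h1 : 1 ≤ l := le_trans (by norm_num) hl
      push_cast [h1]; ring
    rw [hcast] at hpm
    calc ((a - 1) / a) ^ m / ((l : ℝ) - 1) ^ (m - 1) * (n : ℝ) ^ m
        = ((n : ℝ) * ((a - 1) / a)) ^ m / ((l : ℝ) - 1) ^ (m - 1) := by
          rw [mul_pow]; ring
      _ ≤ (∑ i ∈ Finset.univ.erase i₀, d i) ^ m / ((l : ℝ) - 1) ^ (m - 1) :=
          div_le_div_of_nonneg_right hpow (pow_nonneg hl1.le _) |>.trans_eq rfl
      _ ≤ ∑ i ∈ Finset.univ.erase i₀, d i ^ m := hpm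
      _ ≤ ∑ i, d i ^ m := Finset.sum_le_sum_of_subset_of_nonneg
          (Finset.erase_subset _ _) (fun i _ _ => by positivity)
  -- assemble
  have hX : ((a - 1) / a) ^ m / ((l : ℝ) - 1) ^ (m - 1)
      = ε + 1 / (l : ℝ) ^ (m - 1) := by rw [hε]; ring
  rw [hX, add_mul] at hγsum
  have hσ' : ∑ i : Fin l, ((Finset.univ.filter (fun x => σ x = i)).card : ℝ) ^ m
      ≤ 1 / (l : ℝ) ^ (m - 1) * (n : ℝ) ^ m + ε / 2 * (n : ℝ) ^ m := by
    refine hσsum.trans ?_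
    have h5 : ((n : ℝ) + l) ^ m / (l : ℝ) ^ (m - 1)
        ≤ ((1 + δ) * (n : ℝ) ^ m) / (l : ℝ) ^ (m - 1) :=
      div_le_div_of_nonneg_right hkey hlpow.le |>.trans_eq rfl
    refine h5.trans_eq ?_
    rw [hδ]
    field_simp
  linarith
end
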